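/- lim_{x→∞} Γ(x+1, x)/Γ(x+1) = 1/2, where Γ(a,x) is the upper incomplete gamma function. -/

import Mathlib

open Real Filter MeasureTheory

open Set Topology in
section
open Set Topology


lemma stmt5_phi_lower {s : ℝ} (hs : 0 ≤ s) :
    s^2/(2*(1+s)) ≤ s - Real.log (1+s) := by
  set f : ℝ → ℝ := fun s => s - Real.log (1+s) - s^2/(2*(1+s)) with hf
  have hder : ∀ t ∈ Set.Ici (0:ℝ), HasDerivAt f (t^2/(2*(1+t)^2)) t := by
    intro t ht
    have h1 : (0:ℝ) < 1 + t := by have := mem_Ici.1 ht; linarith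
    have hlog : HasDerivAt (fun s : ℝ => Real.log (1+s)) (1/(1+t)) t := by
      have h := (Real.hasDerivAt_log h1.ne').comp t ((hasDerivAt_id t).const_add 1)
      simpa [one_div, Function.comp_def] using h
    have hq : HasDerivAt (fun s : ℝ => s^2/(2*(1+s)))
        ((2*t*(2*(1+t)) - t^2*2)/(2*(1+t))^2) t := by
      have hnum : HasDerivAt (fun s : ℝ => s^2) (2*t) t := by
        simpa using (hasDerivAt_pow 2 t)
      have hden : HasDerivAt (fun s : ℝ => 2*(1+s)) 2 t := by
        simpa using ((hasDerivAt_id t).const_add 1).const_mul 2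
      exact hnum.div hden (by positivity)
    have := ((hasDerivAt_id t).sub hlog).sub hq
    refine this.congr_deriv ?_
    field_simp
    ring
  have hmono : MonotoneOn f (Set.Ici 0) := by
    apply monotoneOn_of_deriv_nonneg (convex_Ici 0)
    · exact fun t ht => ((hder t ht).continuousAt.continuousWithinAt)
    · intro t ht
      rw [interior_Ici] at ht
      exact ((hder t (Ioi_subset_Ici_self ht)).differentiableAt).differentiableWithinAt
    · intro t ht
      rw [interior_Ici] at ht
      rw [(hder t (Ioi_subset_Ici_self ht)).deriv]
      positivity
  have h0 : f 0 = 0 := by simp [hf]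
  have := hmono (self_mem_Ici) (mem_Ici.2 hs) hs
  rw [h0] at this
  simp only [hf] at this
  linarith

lemma stmt5_psi_lower {s : ℝ} (hs : 0 ≤ s) (hs1 : s < 1) :
    s^2/2 ≤ -s - Real.log (1-s) := by
  set f : ℝ → ℝ := fun s => -s - Real.log (1-s) - s^2/2 with hf
  have hder : ∀ t ∈ Set.Ico (0:ℝ) 1, HasDerivAt f (-1 + 1/(1-t) - t) t := by
    intro t ht
    have h1 : (0:ℝ) < 1 - t := by have := ht.2; linarith
    have hlog : HasDerivAt (fun s : ℝ => Real.log (1-s)) (-(1/(1-t))) t := by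
      have h := (Real.hasDerivAt_log h1.ne').comp t ((hasDerivAt_id t).const_sub 1)
      simpa [one_div, Function.comp_def] using h
    have hq : HasDerivAt (fun s : ℝ => s^2/2) t t := by
      simpa using (hasDerivAt_pow 2 t).div_const 2
    have := (((hasDerivAt_id t).neg).sub hlog).sub hq
    refine this.congr_deriv ?_
    ring
  have hmono : MonotoneOn f (Set.Ico 0 1) := by
    apply monotoneOn_of_deriv_nonneg (convex_Ico 0 1)
    · exact fun t ht => ((hder t ht).continuousAt.continuousWithinAt)
    · intro t ht
      rw [interior_Ico] at ht
      exact ((hder t (Ioo_subset_Ico_self ht)).differentiableAt).differentiableWithinAt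
    · intro t ht
      rw [interior_Ico] at ht
      rw [(hder t (Ioo_subset_Ico_self ht)).deriv]
      have h1 : (0:ℝ) < 1 - t := by have := ht.2; linarith
      have : -1 + 1/(1-t) - t = t^2/(1-t) := by field_simp; ring
      rw [this]; positivity
  have h0 : f 0 = 0 := by simp [hf]
  have := hmono (mem_Ico.2 ⟨le_refl 0, one_pos⟩) (mem_Ico.2 ⟨hs, hs1⟩) hs
  rw [h0] at this
  simp only [hf] at this
  linarith


lemma stmt5_phi_taylor {s : ℝ} (h0 : 0 ≤ s) (h1 : s < 1) :
    |(s - Real.log (1+s)) - s^2/2| ≤ s^3/(1-s) := by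
  have habs : |(-s)| < 1 := by rw [abs_neg, abs_of_nonneg h0]; exact h1
  have h := Real.abs_log_sub_add_sum_range_le habs 2
  simp only [Finset.sum_range_succ, Finset.sum_range_zero] at h
  rw [abs_neg, abs_of_nonneg h0] at h
  have he : (1 : ℝ) - -s = 1 + s := by ring
  rw [he] at h
  calc |(s - Real.log (1+s)) - s^2/2|
      = |(((-s)^(0+1)/(0+1) + (-s)^(1+1)/(1+1)) + Real.log (1+s))| := by
        rw [← abs_neg]; congr 1; push_cast; ring
    _ ≤ s^(2+1)/(1-s) := by simpa using h
    _ = s^3/(1-s) := by norm_num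

lemma stmt5_psi_taylor {s : ℝ} (h0 : 0 ≤ s) (h1 : s < 1) :
    |(-s - Real.log (1-s)) - s^2/2| ≤ s^3/(1-s) := by
  have habs : |s| < 1 := by rw [abs_of_nonneg h0]; exact h1
  have h := Real.abs_log_sub_add_sum_range_le habs 2
  simp only [Finset.sum_range_succ, Finset.sum_range_zero] at h
  rw [abs_of_nonneg h0] at h
  calc |(-s - Real.log (1-s)) - s^2/2|
      = |((s^(0+1)/(0+1) + s^(1+1)/(1+1)) + Real.log (1-s))| := by
        rw [← abs_neg]; congr 1; push_cast; ring
    _ ≤ s^(2+1)/(1-s) := by simpa using h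
    _ = s^3/(1-s) := by norm_num


lemma stmt5_sqrt_atTop : Tendsto Real.sqrt atTop atTop := by
  refine tendsto_atTop.2 fun b => ?_
  filter_upwards [eventually_ge_atTop (b^2)] with x hx
  calc b ≤ |b| := le_abs_self b
    _ = Real.sqrt (b^2) := (Real.sqrt_sq_eq_abs b).symm
    _ ≤ Real.sqrt x := Real.sqrt_le_sqrt hx

lemma stmt5_tendsto_xw {w : ℝ → ℝ}
    (hw : ∀ s : ℝ, 0 ≤ s → s < 1 → |w s - s^2/2| ≤ s^3/(1-s)) {u : ℝ} (hu : 0 < u) :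
    Tendsto (fun x : ℝ => x * w (u / Real.sqrt x)) atTop (𝓝 (u^2/2)) := by
  rw [← tendsto_sub_nhds_zero_iff]
  apply squeeze_zero_norm' (a := fun x => u^3 / (Real.sqrt x - u))
  · filter_upwards [stmt5_sqrt_atTop.eventually_ge_atTop (u+1)] with x hx
    have hsx : 0 < Real.sqrt x := by linarith
    have hx0 : 0 < x := Real.sqrt_pos.1 hsx
    set s := u / Real.sqrt x with hs
    have hs0 : 0 < s := div_pos hu hsx
    have hs1 : s < 1 := by
      rw [div_lt_one hsx]; linarith
    have hxs2 : x * (s^2) = u^2 := by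
      rw [hs, div_pow, Real.sq_sqrt hx0.le]
      field_simp
    have heq : x * w s - u^2/2 = x * (w s - s^2/2) := by
      rw [mul_sub, ← hxs2]; ring
    rw [heq, Real.norm_eq_abs, abs_mul, abs_of_pos hx0]
    have hb := hw s hs0.le hs1
    calc x * |w s - s^2/2| ≤ x * (s^3/(1-s)) := by
          exact mul_le_mul_of_nonneg_left hb hx0.le
      _ = u^3 / (Real.sqrt x - u) := by
          rw [hs]
          have hrune : Real.sqrt x - u ≠ 0 := by linarith
          have h2 : Real.sqrt x ^ 2 = x := Real.sq_sqrt hx0.le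
          field_simp
          linear_combination (-1) * h2
  · have h1 : Tendsto (fun x : ℝ => Real.sqrt x - u) atTop atTop :=
      tendsto_atTop_add_const_right _ (-u) stmt5_sqrt_atTop |>.congr (fun x => by ring)
    have := h1.inv_tendsto_atTop.const_mul (u^3)
    simpa [div_eq_mul_inv] using this


noncomputable def stmt5_phiF (x u : ℝ) : ℝ :=
  Real.exp (-(x * (u / Real.sqrt x - Real.log (1 + u / Real.sqrt x))))

noncomputable def stmt5_psiF (x u : ℝ) : ℝ :=
  Real.exp (-(x * (-(u / Real.sqrt x) - Real.log (1 - u / Real.sqrt x))))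

noncomputable def stmt5_fA (x : ℝ) : ℝ := ∫ u in Set.Ioi (0:ℝ), stmt5_phiF x u

noncomputable def stmt5_fB (x : ℝ) : ℝ :=
  ∫ u in Set.Ioi (0:ℝ), Set.indicator (Set.Ioo 0 (Real.sqrt x)) (stmt5_psiF x) u

lemma stmt5_phiF_meas (x : ℝ) : Measurable (stmt5_phiF x) := by
  unfold stmt5_phiF
  have h1 : Measurable fun u : ℝ => u / Real.sqrt x := measurable_id.div_const _
  exact Real.measurable_exp.comp
    (((h1.sub (Real.measurable_log.comp (measurable_const.add h1))).const_mul x).neg)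

lemma stmt5_psiF_meas (x : ℝ) : Measurable (stmt5_psiF x) := by
  unfold stmt5_psiF
  have h1 : Measurable fun u : ℝ => u / Real.sqrt x := measurable_id.div_const _
  exact Real.measurable_exp.comp
    (((h1.neg.sub (Real.measurable_log.comp (measurable_const.sub h1))).const_mul x).neg)

lemma stmt5_gauss : ∫ u in Set.Ioi (0:ℝ), Real.exp (-(1/2 : ℝ) * u^2) = Real.sqrt (2*π) / 2 := by
  rw [integral_gaussian_Ioi (1/2), show π/(1/2 : ℝ) = 2*π by ring]

lemma stmt5_fA_tendsto : Tendsto stmt5_fA atTop (𝓝 (Real.sqrt (2*π) / 2)) := by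
  rw [← stmt5_gauss]
  apply tendsto_integral_filter_of_dominated_convergence
    (bound := fun u => Real.exp (1/4) * Real.exp (-(1/4) * u))
  · filter_upwards with x
    exact (stmt5_phiF_meas x).aestronglyMeasurable
  · filter_upwards [eventually_ge_atTop (1:ℝ)] with x hx1
    rw [ae_restrict_iff' measurableSet_Ioi]
    filter_upwards with u hu
    have hu0 : 0 < u := hu
    have hx0 : (0:ℝ) < x := by linarith
    have hsx : 0 < Real.sqrt x := Real.sqrt_pos.2 hx0
    have hsx1 : 1 ≤ Real.sqrt x := by
      rw [show (1:ℝ) = Real.sqrt 1 by simp]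
      exact Real.sqrt_le_sqrt hx1
    set s := u / Real.sqrt x with hs
    have hs0 : 0 < s := div_pos hu0 hsx
    have hsu : s ≤ u := by
      rw [hs, div_le_iff₀ hsx]
      nlinarith
    have hxs2 : x * s ^ 2 = u ^ 2 := by
      rw [hs, div_pow, Real.sq_sqrt hx0.le]; field_simp
    have hlow : (u - 1) / 4 ≤ x * (s - Real.log (1 + s)) := by
      have h1 := stmt5_phi_lower hs0.le
      have h2 : x * (s^2/(2*(1+s))) ≤ x * (s - Real.log (1+s)) :=
        mul_le_mul_of_nonneg_left h1 hx0.le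
      have h3 : x * (s^2/(2*(1+s))) = u^2/(2*(1+s)) := by
        rw [mul_div_assoc', hxs2]
      have h4 : u^2/(2*(1+u)) ≤ u^2/(2*(1+s)) := by
        apply div_le_div_of_nonneg_left (by positivity) (by positivity)
        linarith
      have h5 : (u - 1)/4 ≤ u^2/(2*(1+u)) := by
        rw [div_le_div_iff₀ (by norm_num) (by positivity)]
        nlinarith
      linarith [h3 ▸ h2]
    rw [stmt5_phiF, Real.norm_eq_abs, Real.abs_exp, ← Real.exp_add]
    apply Real.exp_le_exp.2
    linarith
  · exact ((exp_neg_integrableOn_Ioi 0 (by norm_num : (0:ℝ) < 1/4)).const_mul _)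
  · rw [ae_restrict_iff' measurableSet_Ioi]
    filter_upwards with u hu
    have hu0 : 0 < u := hu
    have key : Tendsto (fun x : ℝ => x * (u / Real.sqrt x - Real.log (1 + u / Real.sqrt x)))
        atTop (𝓝 (u^2/2)) := by
      exact stmt5_tendsto_xw (w := fun s => s - Real.log (1+s))
        (fun s h0 h1 => stmt5_phi_taylor h0 h1) hu0
    have h2 := (Real.continuous_exp.tendsto _).comp key.neg
    simp only [Function.comp_def] at h2
    simp only [stmt5_phiF]
    convert h2 using 2
    ring

lemma stmt5_fB_tendsto : Tendsto stmt5_fB atTop (𝓝 (Real.sqrt (2*π) / 2)) := by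
  rw [← stmt5_gauss]
  apply tendsto_integral_filter_of_dominated_convergence
    (bound := fun u => Real.exp (-(1/2) * u^2))
  · filter_upwards with x
    exact ((stmt5_psiF_meas x).indicator measurableSet_Ioo).aestronglyMeasurable
  · filter_upwards [eventually_ge_atTop (1:ℝ)] with x hx1
    rw [ae_restrict_iff' measurableSet_Ioi]
    filter_upwards with u hu
    have hu0 : 0 < u := hu
    by_cases hmem : u ∈ Set.Ioo 0 (Real.sqrt x)
    · rw [Set.indicator_of_mem hmem]
      have hx0 : (0:ℝ) < x := by linarith
      have hsx : 0 < Real.sqrt x := Real.sqrt_pos.2 hx0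
      set s := u / Real.sqrt x with hs
      have hs0 : 0 < s := div_pos hu0 hsx
      have hs1 : s < 1 := by rw [hs, div_lt_one hsx]; exact hmem.2
      have hxs2 : x * s ^ 2 = u ^ 2 := by
        rw [hs, div_pow, Real.sq_sqrt hx0.le]; field_simp
      have hlow : u^2/2 ≤ x * (-s - Real.log (1 - s)) := by
        have h1 := stmt5_psi_lower hs0.le hs1
        have h2 : x * (s^2/2) ≤ x * (-s - Real.log (1-s)) :=
          mul_le_mul_of_nonneg_left h1 hx0.le
        have h3 : x * (s^2/2) = u^2/2 := by rw [mul_div_assoc', hxs2]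
        linarith [h3 ▸ h2]
      rw [stmt5_psiF, Real.norm_eq_abs, Real.abs_exp]
      apply Real.exp_le_exp.2
      have : -(u/Real.sqrt x) - Real.log (1 - u/Real.sqrt x) = -s - Real.log (1-s) := by rw [hs]
      rw [this]
      nlinarith
    · rw [Set.indicator_of_notMem hmem]
      simp only [norm_zero]
      positivity
  · exact (integrable_exp_neg_mul_sq (by norm_num : (0:ℝ) < 1/2)).integrableOn
  · rw [ae_restrict_iff' measurableSet_Ioi]
    filter_upwards with u hu
    have hu0 : 0 < u := hu
    have key : Tendsto (fun x : ℝ => x * (-(u / Real.sqrt x) - Real.log (1 - u / Real.sqrt x)))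
        atTop (𝓝 (u^2/2)) := by
      exact stmt5_tendsto_xw (w := fun s => -s - Real.log (1-s))
        (fun s h0 h1 => stmt5_psi_taylor h0 h1) hu0
    have h2 := (Real.continuous_exp.tendsto _).comp key.neg
    simp only [Function.comp_def] at h2
    have h3 : Tendsto (fun x : ℝ => stmt5_psiF x u) atTop (𝓝 (Real.exp (-(1/2) * u^2))) := by
      simp only [stmt5_psiF]
      convert h2 using 2
      ring
    apply h3.congr'
    filter_upwards [stmt5_sqrt_atTop.eventually_gt_atTop u] with x hx
    rw [Set.indicator_of_mem (Set.mem_Ioo.2 ⟨hu0, hx⟩)]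

lemma stmt5_shift (g : ℝ → ℝ) (x : ℝ) :
    ∫ t in Set.Ioi x, g t = ∫ s in Set.Ioi (0:ℝ), g (s + x) := by
  rw [← integral_indicator measurableSet_Ioi, ← integral_indicator measurableSet_Ioi,
    ← integral_add_right_eq_self (fun t => (Set.Ioi x).indicator g t) x]
  congr 1
  ext s
  by_cases h : (0:ℝ) < s
  · rw [Set.indicator_of_mem (by simpa using h), Set.indicator_of_mem (by exact h)]
  · rw [Set.indicator_of_notMem (by simpa using h), Set.indicator_of_notMem (by exact h)]

lemma stmt5_A_eq {x : ℝ} (hx : 0 < x) :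
    ∫ t in Set.Ioi x, Real.exp (-t) * t ^ x
      = Real.exp (-x) * x ^ x * Real.sqrt x * stmt5_fA x := by
  have hsx : 0 < Real.sqrt x := Real.sqrt_pos.2 hx
  rw [stmt5_shift (fun t => Real.exp (-t) * t ^ x) x]
  have h := integral_comp_mul_left_Ioi (fun s => Real.exp (-(s + x)) * (s + x) ^ x) 0 hsx
  rw [mul_zero, smul_eq_mul] at h
  have h2 : ∫ s in Set.Ioi (0:ℝ), Real.exp (-(s + x)) * (s + x) ^ x
      = Real.sqrt x * ∫ u in Set.Ioi (0:ℝ),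
          Real.exp (-(Real.sqrt x * u + x)) * (Real.sqrt x * u + x) ^ x := by
    rw [h]
    field_simp
  rw [h2]
  have h3 : ∀ u ∈ Set.Ioi (0:ℝ),
      Real.exp (-(Real.sqrt x * u + x)) * (Real.sqrt x * u + x) ^ x
        = Real.exp (-x) * x ^ x * stmt5_phiF x u := by
    intro u hu
    have hu0 : 0 < u := hu
    have hkey : x * (u / Real.sqrt x) = Real.sqrt x * u := by
      have : x * (u / Real.sqrt x) = u * (x / Real.sqrt x) := by ring
      rw [this, Real.div_sqrt]; ring
    have hbase : Real.sqrt x * u + x = x * (1 + u / Real.sqrt x) := by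
      rw [mul_add, mul_one, hkey]; ring
    have hpos : (0:ℝ) < 1 + u / Real.sqrt x := by positivity
    rw [hbase, Real.mul_rpow hx.le hpos.le, Real.rpow_def_of_pos hpos, stmt5_phiF]
    rw [show Real.exp (-(x * (1 + u / Real.sqrt x)))
          * (x ^ x * Real.exp (Real.log (1 + u / Real.sqrt x) * x))
        = x ^ x * Real.exp (-(x * (1 + u / Real.sqrt x))
            + Real.log (1 + u / Real.sqrt x) * x) by rw [Real.exp_add]; ring]
    rw [show Real.exp (-x) * x ^ x
          * Real.exp (-(x * (u / Real.sqrt x - Real.log (1 + u / Real.sqrt x))))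
        = x ^ x * Real.exp (-x
            + -(x * (u / Real.sqrt x - Real.log (1 + u / Real.sqrt x)))) by
      rw [Real.exp_add]; ring]
    congr 1
    ring
  rw [setIntegral_congr_fun measurableSet_Ioi h3, integral_const_mul, stmt5_fA]
  ring

lemma stmt5_B_eq {x : ℝ} (hx : 0 < x) :
    ∫ t in Set.Ioc 0 x, Real.exp (-t) * t ^ x
      = Real.exp (-x) * x ^ x * Real.sqrt x * stmt5_fB x := by
  have hsx : 0 < Real.sqrt x := Real.sqrt_pos.2 hx
  set g : ℝ → ℝ := fun t => Real.exp (-t) * t ^ x with hg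
  have e1 : ∫ t in Set.Ioc 0 x, g t = ∫ t in (0:ℝ)..x, g t :=
    (intervalIntegral.integral_of_le hx.le).symm
  have e2 : ∫ t in (0:ℝ)..x, g t = ∫ t in (0:ℝ)..x, g (x - t) := by
    rw [intervalIntegral.integral_comp_sub_left g x, sub_self, sub_zero]
  have e3 : ∫ u in (0:ℝ)..(Real.sqrt x), g (x - Real.sqrt x * u)
      = (Real.sqrt x)⁻¹ * ∫ t in (0:ℝ)..x, g (x - t) := by
    have h := intervalIntegral.integral_comp_mul_left (a := (0:ℝ)) (b := Real.sqrt x)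
      (fun t => g (x - t)) hsx.ne'
    rw [mul_zero, Real.mul_self_sqrt hx.le, smul_eq_mul] at h
    exact h
  have e4 : ∫ t in (0:ℝ)..x, g (x - t)
      = Real.sqrt x * ∫ u in (0:ℝ)..(Real.sqrt x), g (x - Real.sqrt x * u) := by
    rw [e3]; field_simp
  have e5 : ∫ u in (0:ℝ)..(Real.sqrt x), g (x - Real.sqrt x * u)
      = ∫ u in Set.Ioo 0 (Real.sqrt x), g (x - Real.sqrt x * u) := by
    rw [intervalIntegral.integral_of_le hsx.le, integral_Ioc_eq_integral_Ioo]
  have h3 : ∀ u ∈ Set.Ioo (0:ℝ) (Real.sqrt x),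
      g (x - Real.sqrt x * u) = Real.exp (-x) * x ^ x * stmt5_psiF x u := by
    intro u hu
    have hu0 : 0 < u := hu.1
    have hkey : x * (u / Real.sqrt x) = Real.sqrt x * u := by
      have : x * (u / Real.sqrt x) = u * (x / Real.sqrt x) := by ring
      rw [this, Real.div_sqrt]; ring
    have hbase : x - Real.sqrt x * u = x * (1 - u / Real.sqrt x) := by
      rw [mul_sub, mul_one, hkey]
    have hpos : (0:ℝ) < 1 - u / Real.sqrt x := by
      rw [sub_pos, div_lt_one hsx]; exact hu.2
    rw [hg]
    simp only
    rw [hbase, Real.mul_rpow hx.le hpos.le, Real.rpow_def_of_pos hpos, stmt5_psiF]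
    rw [show Real.exp (-(x * (1 - u / Real.sqrt x)))
          * (x ^ x * Real.exp (Real.log (1 - u / Real.sqrt x) * x))
        = x ^ x * Real.exp (-(x * (1 - u / Real.sqrt x))
            + Real.log (1 - u / Real.sqrt x) * x) by rw [Real.exp_add]; ring]
    rw [show Real.exp (-x) * x ^ x
          * Real.exp (-(x * (-(u / Real.sqrt x) - Real.log (1 - u / Real.sqrt x))))
        = x ^ x * Real.exp (-x
            + -(x * (-(u / Real.sqrt x) - Real.log (1 - u / Real.sqrt x)))) by
      rw [Real.exp_add]; ring]
    congr 1
    ring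
  have e6 : ∫ u in Set.Ioo 0 (Real.sqrt x), g (x - Real.sqrt x * u)
      = Real.exp (-x) * x ^ x * stmt5_fB x := by
    rw [setIntegral_congr_fun measurableSet_Ioo h3, integral_const_mul, stmt5_fB,
      integral_indicator measurableSet_Ioo, Measure.restrict_restrict measurableSet_Ioo,
      Set.inter_eq_left.2 Set.Ioo_subset_Ioi_self]
  rw [e1, e2, e4, e5, e6]
  ring

end

open Set Topology in
/-- lim_{x→∞} Γ(x+1, x)/Γ(x+1) = 1/2, with Γ(a,x)=∫ₓ^∞ e^{-t}t^{a-1}dt. -/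
theorem stmt_5 :
    Tendsto (fun x : ℝ =>
      (∫ t in Set.Ioi x, Real.exp (-t) * t ^ ((x + 1) - 1)) / Real.Gamma (x + 1))
      atTop (nhds (1/2)) := by
  have hsq : (0:ℝ) < Real.sqrt (2*π) := Real.sqrt_pos.2 (by positivity)
  have hlim : Tendsto (fun x : ℝ => stmt5_fA x / (stmt5_fB x + stmt5_fA x))
      atTop (𝓝 (1/2)) := by
    have hd := stmt5_fB_tendsto.add stmt5_fA_tendsto
    have h := stmt5_fA_tendsto.div hd (by positivity)
    convert h using 2
    · rfl
    · field_simp; norm_num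
  apply hlim.congr'
  filter_upwards [eventually_ge_atTop (1:ℝ)] with x hx1
  have hx0 : (0:ℝ) < x := by linarith
  have hsimp : ∀ t : ℝ, Real.exp (-t) * t ^ ((x + 1) - 1) = Real.exp (-t) * t ^ x := by
    intro t; norm_num
  have hnum : (∫ t in Set.Ioi x, Real.exp (-t) * t ^ ((x + 1) - 1))
      = Real.exp (-x) * x ^ x * Real.sqrt x * stmt5_fA x := by
    simp_rw [hsimp]
    exact stmt5_A_eq hx0
  have hint : IntegrableOn (fun t : ℝ => Real.exp (-t) * t ^ x) (Set.Ioi 0) := by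
    have h := Real.GammaIntegral_convergent (show (0:ℝ) < x + 1 by linarith)
    simpa using h
  have hgamma : Real.Gamma (x + 1)
      = Real.exp (-x) * x ^ x * Real.sqrt x * (stmt5_fB x + stmt5_fA x) := by
    rw [Real.Gamma_eq_integral (show (0:ℝ) < x + 1 by linarith)]
    simp_rw [hsimp]
    rw [← Set.Ioc_union_Ioi_eq_Ioi hx0.le,
      setIntegral_union (Set.Ioc_disjoint_Ioi le_rfl) measurableSet_Ioi
        (hint.mono_set (Set.Ioc_subset_Ioi_self))
        (hint.mono_set (Set.Ioi_subset_Ioi hx0.le)),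
      stmt5_B_eq hx0, stmt5_A_eq hx0]
    ring
  rw [hnum, hgamma]
  have hc : Real.exp (-x) * x ^ x * Real.sqrt x ≠ 0 := by positivity
  rw [mul_div_mul_left _ _ hc]
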